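/- Fix continuous ψ, c : [0, ∞) → ℝ. Let f : [0, ∞) → ℝ be continuous with f(0) ≥ ψ(0), and suppose that f(t) ≥ ψ(t) for every t > 0 at which there exists a C¹ subtangent φ to f (i.e. φ(t) = f(t) and f − φ has a local minimum at t) with φ'(t) < c(t). Then f ≥ G[ψ, c] on [0, ∞). -/

import Mathlib

open Set Filter MeasureTheory intervalIntegral

/-- The operator `G[ψ, c](t) = min_{r ∈ [0, t]} ( ψ(r) + ∫_r^t c(τ) dτ )`. -/
noncomputable def Gop (ψ c : ℝ → ℝ) (t : ℝ) : ℝ :=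
  sInf ((fun r => ψ r + ∫ τ in r..t, c τ) '' Icc 0 t)

/-- if `f(0) ≥ ψ(0)` and `f(t) ≥ ψ(t)` at every `t > 0` admitting a C¹
subtangent `φ` to `f` with `φ'(t) < c(t)`, then `f ≥ G[ψ, c]` on `[0, ∞)`. -/
theorem Gop_lower_bound (ψ c : ℝ → ℝ)
    (hψ : ContinuousOn ψ (Ici 0)) (hc : ContinuousOn c (Ici 0))
    (f : ℝ → ℝ) (hf : ContinuousOn f (Ici 0))
    (h0 : ψ 0 ≤ f 0)
    (hsub : ∀ t : ℝ, 0 < t →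
      (∃ φ : ℝ → ℝ, ContDiff ℝ 1 φ ∧ φ t = f t ∧
        IsLocalMin (fun τ => f τ - φ τ) t ∧ deriv φ t < c t) →
      ψ t ≤ f t) :
    ∀ t : ℝ, 0 ≤ t → Gop ψ c t ≤ f t := by
  -- extended integrand and its antiderivative
  have hct : Continuous (fun τ : ℝ => c (max τ 0)) :=
    hc.comp_continuous (continuous_id.max continuous_const) fun x => mem_Ici.mpr (le_max_right _ _)
  set ct : ℝ → ℝ := fun τ => c (max τ 0) with hctdef
  set Ct : ℝ → ℝ := fun x => ∫ τ in (0:ℝ)..x, ct τ with hCtdef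
  have hCtD : ∀ x, HasDerivAt Ct (ct x) x := fun x =>
    (hct.integral_hasStrictDerivAt 0 x).hasDerivAt
  have hCtc : Continuous Ct :=
    continuous_iff_continuousAt.mpr fun x => (hCtD x).differentiableAt.continuousAt
  have hCt1 : ContDiff ℝ 1 Ct := by
    rw [contDiff_one_iff_deriv]
    refine ⟨fun x => (hCtD x).differentiableAt, ?_⟩
    have hd : deriv Ct = ct := funext fun x => (hCtD x).deriv
    rw [hd]; exact hct
  intro t₀ ht₀
  rcases eq_or_lt_of_le ht₀ with h | h
  · -- case t₀ = 0
    simp only [Gop, ← h, Set.Icc_self, Set.image_singleton, csInf_singleton,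
      intervalIntegral.integral_same, add_zero]
    exact h0
  -- case 0 < t₀
  have hint : ∀ r : ℝ, 0 ≤ r → (∫ τ in r..t₀, c τ) = Ct t₀ - Ct r := by
    intro r hr
    have h1 : (∫ τ in r..t₀, c τ) = ∫ τ in r..t₀, ct τ := by
      apply intervalIntegral.integral_congr
      intro τ hτ
      have hτ0 : (0:ℝ) ≤ τ := by
        rcases Set.mem_uIcc.mp hτ with ⟨h3, _⟩ | ⟨h3, _⟩ <;> linarith
      simp [hctdef, max_eq_left hτ0]
    rw [h1, hCtdef]
    exact (integral_interval_sub_left (hct.intervalIntegrable 0 t₀)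
      (hct.intervalIntegrable 0 r)).symm
  -- lower bound for Gop by individual values
  have hGle : ∀ r ∈ Icc (0:ℝ) t₀, Gop ψ c t₀ ≤ ψ r + (Ct t₀ - Ct r) := by
    intro r hr
    have hcont : ContinuousOn (fun r => ψ r + ∫ τ in r..t₀, c τ) (Icc 0 t₀) := by
      apply ContinuousOn.congr
        (f := fun r => ψ r + (Ct t₀ - Ct r))
      · exact (hψ.mono (Icc_subset_Ici_self)).add
          (continuous_const.sub hCtc).continuousOn
      · intro x hx; simp only; rw [hint x hx.1]
    have hbdd : BddBelow ((fun r => ψ r + ∫ τ in r..t₀, c τ) '' Icc 0 t₀) :=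
      (isCompact_Icc.image_of_continuousOn hcont).bddBelow
    have hmem : ψ r + ∫ τ in r..t₀, c τ ∈
        (fun r => ψ r + ∫ τ in r..t₀, c τ) '' Icc 0 t₀ := ⟨r, hr, rfl⟩
    have := csInf_le hbdd hmem
    rwa [hint r hr.1] at this
  -- main ε-estimate
  have key : ∀ ε : ℝ, 0 < ε → Gop ψ c t₀ ≤ f t₀ + ε * t₀ := by
    intro ε hε
    by_contra hcon
    push_neg at hcon
    have hstar : ∀ r ∈ Icc (0:ℝ) t₀, f t₀ + ε * t₀ < ψ r + (Ct t₀ - Ct r) :=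
      fun r hr => lt_of_lt_of_le hcon (hGle r hr)
    -- f t₀ < ψ t₀
    have hft₀ : f t₀ < ψ t₀ := by
      have := hstar t₀ ⟨ht₀, le_rfl⟩
      have hεt : 0 < ε * t₀ := mul_pos hε h
      linarith
    -- neighborhood where f < ψ
    have hfc : ContinuousAt f t₀ := hf.continuousAt (Ici_mem_nhds h)
    have hψc : ContinuousAt ψ t₀ := hψ.continuousAt (Ici_mem_nhds h)
    have hev : ∀ᶠ s in nhds t₀, f s < ψ s := hfc.eventually_lt hψc hft₀
    obtain ⟨δ, hδpos, hδ⟩ := Metric.eventually_nhds_iff.mp hev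
    set T : ℝ := t₀ + δ / 2 with hTdef
    have hT : t₀ < T := by simp [hTdef]; linarith
    have hT0 : (0:ℝ) ≤ T := le_trans ht₀ hT.le
    -- the penalty function q
    have hgc : Continuous (fun τ : ℝ => max (τ - t₀) 0) :=
      (continuous_id.sub continuous_const).max continuous_const
    set q : ℝ → ℝ := fun s => ∫ τ in (0:ℝ)..s, max (τ - t₀) 0 with hqdef
    have hqD : ∀ s, HasDerivAt q (max (s - t₀) 0) s := fun s =>
      (hgc.integral_hasStrictDerivAt 0 s).hasDerivAt
    have hqc : Continuous q :=
      continuous_iff_continuousAt.mpr fun x => (hqD x).differentiableAt.continuousAt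
    have hq1 : ContDiff ℝ 1 q := by
      rw [contDiff_one_iff_deriv]
      refine ⟨fun x => (hqD x).differentiableAt, ?_⟩
      have hd : deriv q = fun s => max (s - t₀) 0 := funext fun x => (hqD x).deriv
      rw [hd]; exact hgc
    have hq0 : ∀ s ∈ Icc (0:ℝ) t₀, q s = 0 := by
      intro s hs
      have : (∫ τ in (0:ℝ)..s, max (τ - t₀) 0) = ∫ τ in (0:ℝ)..s, (0:ℝ) := by
        apply intervalIntegral.integral_congr
        intro τ hτ
        rw [Set.uIcc_of_le hs.1] at hτ
        have : τ - t₀ ≤ 0 := by have := hτ.2; have := hs.2; linarith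
        simp [max_eq_right this]
      simp [hqdef, this]
    have hqnn : ∀ s, 0 ≤ s → 0 ≤ q s := fun s hs =>
      intervalIntegral.integral_nonneg hs fun τ _ => le_max_right _ _
    have hqT : 0 < q T := by
      have hsplit : q T = (∫ τ in (0:ℝ)..t₀, max (τ - t₀) 0)
          + ∫ τ in t₀..T, max (τ - t₀) 0 :=
        (intervalIntegral.integral_add_adjacent_intervals
          (hgc.intervalIntegrable 0 t₀) (hgc.intervalIntegrable t₀ T)).symm
      have h1 : (∫ τ in (0:ℝ)..t₀, max (τ - t₀) 0) = q t₀ := rfl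
      have h2 : 0 < ∫ τ in t₀..T, max (τ - t₀) 0 := by
        apply intervalIntegral.intervalIntegral_pos_of_pos_on
          (hgc.intervalIntegrable t₀ T)
        · intro x hx
          have : 0 < x - t₀ := by linarith [hx.1]
          simp [max_eq_left this.le, this]
        · exact hT
      rw [hsplit, h1, hq0 t₀ ⟨ht₀, le_rfl⟩]
      linarith
    -- the functional to minimize
    set F : ℝ → ℝ := fun s => f s - Ct s + ε * s with hFdef
    set K : ℝ := max ((F t₀ - F T) / q T) 0 + 1 with hKdef
    have hK0 : 0 ≤ K := by
      have := le_max_right ((F t₀ - F T) / q T) 0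
      simp [hKdef]; linarith
    have hKT : F t₀ < F T + K * q T := by
      have h1 : (F t₀ - F T) / q T < K := by
        have := le_max_left ((F t₀ - F T) / q T) 0
        simp [hKdef]; linarith
      have := (div_lt_iff₀ hqT).mp h1
      linarith
    set Φ : ℝ → ℝ := fun s => F s + K * q s with hΦdef
    have hΦc : ContinuousOn Φ (Icc 0 T) := by
      apply ContinuousOn.add
      · exact ((hf.mono fun x hx => hx.1).sub hCtc.continuousOn).add
          (continuous_const.mul continuous_id).continuousOn
      · exact (continuous_const.mul hqc).continuousOn
    obtain ⟨sb, hsbmem, hsbmin⟩ :=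
      isCompact_Icc.exists_isMinOn (Set.nonempty_Icc.mpr hT0) hΦc
    have hmin := isMinOn_iff.mp hsbmin
    have ht₀mem : t₀ ∈ Icc (0:ℝ) T := ⟨ht₀, hT.le⟩
    have hΦt₀ : Φ t₀ = F t₀ := by
      simp [hΦdef, hq0 t₀ ⟨ht₀, le_rfl⟩]
    have hminle : Φ sb ≤ F t₀ := by
      have := hmin t₀ ht₀mem
      rwa [hΦt₀] at this
    -- sb ≠ T
    have hsbT : sb < T := by
      rcases lt_or_eq_of_le hsbmem.2 with h' | h'
      · exact h'
      · exfalso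
        rw [h'] at hminle
        have : Φ T = F T + K * q T := rfl
        rw [this] at hminle
        linarith
    rcases eq_or_lt_of_le hsbmem.1 with hsb0 | hsb0
    · -- sb = 0
      have hΦ0 : Φ 0 = f 0 := by
        simp [hΦdef, hFdef, hCtdef, hq0 0 ⟨le_rfl, ht₀⟩]
      rw [← hsb0, hΦ0] at hminle
      have := hstar 0 ⟨le_rfl, ht₀⟩
      have hCt0 : Ct 0 = 0 := by simp [hCtdef]
      rw [hCt0] at this
      -- f 0 ≤ F t₀ = f t₀ - Ct t₀ + ε t₀, ψ 0 ≤ f 0, contradiction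
      simp only [hFdef] at hminle
      linarith
    · -- 0 < sb < T : apply the subtangent hypothesis
      set φ : ℝ → ℝ := fun τ => Ct τ - ε * τ - K * q τ + Φ sb with hφdef
      have hφ1 : ContDiff ℝ 1 φ := by
        exact ((hCt1.sub (contDiff_const.mul contDiff_id)).sub
          (contDiff_const.mul hq1)).add contDiff_const
      have hφsb : φ sb = f sb := by
        simp only [hφdef, hΦdef, hFdef]; ring
      have hlocmin : IsLocalMin (fun τ => f τ - φ τ) sb := by
        have heq : (fun τ => f τ - φ τ) = fun τ => Φ τ - Φ sb := by
          funext τ; simp [hφdef, hΦdef, hFdef]; ring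
        rw [heq]
        have h1 : IsLocalMin Φ sb := hsbmin.isLocalMin (Icc_mem_nhds hsb0 hsbT)
        exact h1.mono fun x hx => sub_le_sub_right hx _
      have hφD : HasDerivAt φ (ct sb - ε - K * max (sb - t₀) 0) sb := by
        have h1 : HasDerivAt (fun τ => ε * τ) ε sb := by
          simpa using (hasDerivAt_id sb).const_mul ε
        have h2 : HasDerivAt (fun τ => K * q τ) (K * max (sb - t₀) 0) sb :=
          (hqD sb).const_mul K
        exact (((hCtD sb).sub h1).sub h2).add_const _
      have hctsb : ct sb = c sb := by
        simp [hctdef, max_eq_left hsb0.le]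
      have hderiv : deriv φ sb < c sb := by
        rw [hφD.deriv, hctsb]
        have : 0 ≤ K * max (sb - t₀) 0 := mul_nonneg hK0 (le_max_right _ _)
        linarith
      have hψsb : ψ sb ≤ f sb := hsub sb hsb0 ⟨φ, hφ1, hφsb, hlocmin, hderiv⟩
      rcases le_or_gt sb t₀ with hle | hlt
      · -- sb ∈ [0, t₀]
        have hq0' : q sb = 0 := hq0 sb ⟨hsb0.le, hle⟩
        have h1 : f sb - Ct sb + ε * sb ≤ f t₀ - Ct t₀ + ε * t₀ := by
          have := hminle
          simp only [hΦdef, hFdef, hq0'] at this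
          linarith
        have h2 := hstar sb ⟨hsb0.le, hle⟩
        have h3 : 0 ≤ ε * sb := mul_nonneg hε.le hsb0.le
        linarith
      · -- sb ∈ (t₀, T) : f sb < ψ sb, contradiction
        have hdist : dist sb t₀ < δ := by
          rw [Real.dist_eq, abs_of_pos (by linarith : (0:ℝ) < sb - t₀)]
          have : sb < t₀ + δ / 2 := hsbT
          linarith
        exact absurd hψsb (not_le.mpr (hδ hdist))
  -- conclude from the ε-estimate
  refine le_of_forall_pos_le_add fun η hη => ?_
  have := key (η / t₀) (div_pos hη h)
  rwa [div_mul_cancel₀ η (ne_of_gt h)] at this
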